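/- arXiv:2501.12096 — 2 statements merged into one kernel-verified Lean document; each statement's English description precedes it below -/
import Mathlib

section
/- Let L be a finite pure 2-dimensional simplicial complex that is shellable. Then the 1-skeleton L^(1) of L, regarded as a simple graph, has a spanning tree G that is weakly K_3-saturated in L^(1). -/
/-- A finite abstract simplicial complex on vertex type `V`: a finite family of
nonempty finite sets closed under taking nonempty subsets. -/
structure SComplex (V : Type*) where
  faces : Finset (Finset V)
  nonempty_mem : ∀ σ ∈ faces, σ.Nonempty
  down_closed : ∀ σ ∈ faces, ∀ τ, τ ⊆ σ → τ.Nonempty → τ ∈ faces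

namespace SComplex

variable {V : Type*}

/-- A facet is an inclusion-maximal face. -/
def IsFacet (K : SComplex V) (σ : Finset V) : Prop :=
  σ ∈ K.faces ∧ ∀ τ ∈ K.faces, σ ⊆ τ → σ = τ

/-- `K` is pure `d`-dimensional: `K` is nonempty and all facets have dimension `d`
(i.e. cardinality `d + 1`). -/
def PureDim (K : SComplex V) (d : ℕ) : Prop :=
  K.faces.Nonempty ∧ ∀ σ, K.IsFacet σ → σ.card = d + 1

/-- The 1-skeleton of a complex, regarded as a simple graph on `V`. -/
def skel1 [DecidableEq V] (K : SComplex V) : SimpleGraph V where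
  Adj u v := u ≠ v ∧ ({u, v} : Finset V) ∈ K.faces
  symm := by
    constructor
    intro u v h
    exact ⟨h.1.symm, by rw [Finset.pair_comm]; exact h.2⟩
  loopless := ⟨fun u h => h.1 rfl⟩

/-- `K` is shellable (as a pure `d`-dimensional complex): its facets can be ordered
`θ₁, …, θₘ` so that for every `i ≥ 2` the complex `K[θᵢ] ∩ K[θ₁, …, θ_{i-1}]` is pure
and `(d-1)`-dimensional, i.e. it is nonempty and all of its facets have cardinality `d`. -/
def Shellable (K : SComplex V) (d : ℕ) : Prop :=
  ∃ l : List (Finset V), l.Nodup ∧ (∀ σ, σ ∈ l ↔ K.IsFacet σ) ∧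
    ∀ i : Fin l.length, 1 ≤ i.val →
      ((∃ σ : Finset V, σ.Nonempty ∧ σ ⊆ l.get i ∧
          ∃ j : Fin l.length, j < i ∧ σ ⊆ l.get j) ∧
       ∀ σ : Finset V,
         (σ.Nonempty ∧ σ ⊆ l.get i ∧ ∃ j : Fin l.length, j < i ∧ σ ⊆ l.get j) →
         (∀ τ : Finset V,
            (τ.Nonempty ∧ τ ⊆ l.get i ∧ ∃ j : Fin l.length, j < i ∧ τ ⊆ l.get j) →
            σ ⊆ τ → σ = τ) →
         σ.card = d)

/-- `K'` arises from `K` by an elementary collapse: there is a face `τ` of `K` contained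
in a single facet `σ` distinct from `τ`, and `K'` is obtained from `K` by removing all
faces containing `τ`. -/
def ElemCollapse (K K' : SComplex V) : Prop :=
  ∃ τ σ : Finset V, τ ∈ K.faces ∧ K.IsFacet σ ∧ τ ≠ σ ∧ τ ⊆ σ ∧
    (∀ ρ, K.IsFacet ρ → τ ⊆ ρ → ρ = σ) ∧
    (∀ ρ, ρ ∈ K'.faces ↔ ρ ∈ K.faces ∧ ¬ τ ⊆ ρ)

/-- `K` collapses to `L` via a finite sequence of elementary collapses. -/
def CollapsesTo (K L : SComplex V) : Prop :=
  Relation.ReflTransGen ElemCollapse K L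

/-- `K` is collapsible: it collapses to a complex consisting of a single vertex. -/
def Collapsible (K : SComplex V) : Prop :=
  ∃ L : SComplex V, K.CollapsesTo L ∧ ∃ v : V, L.faces = {{v}}

/-- The reduced Euler characteristic `χ̃(K) = (Σᵢ (-1)^i fᵢ(K)) - 1`. -/
def redEuler (K : SComplex V) : ℤ :=
  (∑ σ ∈ K.faces, (-1 : ℤ) ^ (σ.card + 1)) - 1

/-- `K` is flag: every (nonempty) set of vertices of `K` that are pairwise joined by
edges of `K` is a face of `K`. -/
def Flag [DecidableEq V] (K : SComplex V) : Prop :=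
  ∀ C : Finset V, C.Nonempty → (∀ a ∈ C, ({a} : Finset V) ∈ K.faces) →
    (∀ a ∈ C, ∀ b ∈ C, a ≠ b → ({a, b} : Finset V) ∈ K.faces) → C ∈ K.faces

/-- The barycentric subdivision of `K`: vertices are the (nonempty) faces of `K`, and
faces are the nonempty collections of faces of `K` that form a chain under inclusion. -/
noncomputable def sd [DecidableEq V] (K : SComplex V) : SComplex (Finset V) := by
  classical
  exact
  { faces := K.faces.powerset.filter
      (fun C => C.Nonempty ∧ ∀ a ∈ C, ∀ b ∈ C, a ⊆ b ∨ b ⊆ a)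
    nonempty_mem := fun C hC => (Finset.mem_filter.mp hC).2.1
    down_closed := by
      intro C hC D hDC hD
      rw [Finset.mem_filter, Finset.mem_powerset] at hC ⊢
      exact ⟨hDC.trans hC.1, hD, fun a ha b hb => hC.2.2 a (hDC ha) b (hDC hb)⟩ }

end SComplex

/-- `es` is a witnessing sequence that `G` is weakly `K₃`-saturated in `F`:
`G` is a spanning subgraph of `F`, `es` is an ordering of the edges of `F` not in `G`,
and adding them one by one, each added edge completes a copy of `K₃` containing it. -/
def WitnessesWeakK3Sat {V : Type*} (F G : SimpleGraph V) (es : List (Sym2 V)) : Prop :=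
  G ≤ F ∧ es.Nodup ∧ (∀ e, e ∈ es ↔ e ∈ F.edgeSet \ G.edgeSet) ∧
    ∀ i : Fin es.length, ∃ x y z : V,
      es.get i = s(x, y) ∧
      (G ⊔ SimpleGraph.fromEdgeSet {e | e ∈ es.take (i.val + 1)}).Adj x y ∧
      (G ⊔ SimpleGraph.fromEdgeSet {e | e ∈ es.take (i.val + 1)}).Adj y z ∧
      (G ⊔ SimpleGraph.fromEdgeSet {e | e ∈ es.take (i.val + 1)}).Adj z x

/-- `G` is weakly `K₃`-saturated in `F`. -/
def WeaklyK3Saturated {V : Type*} (F G : SimpleGraph V) : Prop :=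
  ∃ es : List (Sym2 V), WitnessesWeakK3Sat F G es

/-- The weak saturation number `wsat(F, K₃)`: the minimum number of edges of a graph
weakly `K₃`-saturated in `F`. -/
noncomputable def wsatK3 (V : Type*) [Fintype V] (F : SimpleGraph V) : ℕ :=
  sInf {n | ∃ G : SimpleGraph V, WeaklyK3Saturated F G ∧ G.edgeSet.ncard = n}

section AuxArea
open SimpleGraph List

variable {V : Type*}

lemma walk_exists_edge_to_end {G : SimpleGraph V} :
    ∀ {u v : V} (p : G.Walk u v), u ≠ v → ∃ y, s(y, v) ∈ p.edges := by
  intro u v p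
  induction p with
  | nil => intro h; exact absurd rfl h
  | @cons a b w h q ih =>
    intro _
    by_cases hbw : b = w
    · subst hbw; exact ⟨a, by simp⟩
    · obtain ⟨y, hy⟩ := ih hbw
      exact ⟨y, by simp [hy]⟩

lemma fromEdgeSet_list_append (T : List (Sym2 V)) (e₀ : Sym2 V) :
    SimpleGraph.fromEdgeSet {e | e ∈ T ++ [e₀]} =
      SimpleGraph.fromEdgeSet {e | e ∈ T} ⊔ SimpleGraph.fromEdgeSet {e₀} := by
  ext u v
  simp only [fromEdgeSet_adj, Set.mem_setOf_eq, List.mem_append, List.mem_singleton, sup_adj,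
    Set.mem_singleton_iff]
  tauto

lemma isAcyclic_sup_pendant {G : SimpleGraph V} (hG : G.IsAcyclic) {b c : V} (hbc : b ≠ c)
    (hc : ∀ x, ¬ G.Adj c x) : (G ⊔ SimpleGraph.fromEdgeSet {s(b,c)}).IsAcyclic := by
  classical
  set G' := G ⊔ SimpleGraph.fromEdgeSet {s(b,c)} with hG'def
  have key : ∀ x, G'.Adj c x → x = b := by
    intro x hx
    rcases hx with h | h
    · exact absurd h (hc x)
    · rw [fromEdgeSet_adj] at h
      have h1 := h.1
      simp only [Set.mem_singleton_iff, Sym2.eq_iff] at h1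
      rcases h1 with ⟨h1, h2⟩ | ⟨h1, h2⟩
      · exact absurd h1.symm hbc
      · exact h2
  intro v p hp
  by_cases he : s(b,c) ∈ p.edges
  · have hcsup : c ∈ p.support := p.snd_mem_support_of_mem_edges he
    have hq : (p.rotate c hcsup).IsCycle := hp.rotate hcsup
    obtain ⟨w, h, r, heq⟩ := SimpleGraph.Walk.not_nil_iff.mp hq.not_nil
    rw [heq] at hq
    have hwb : w = b := key _ h
    obtain ⟨y, hy⟩ := walk_exists_edge_to_end r (hwb ▸ hbc)
    have hyadj : G'.Adj y c := by
      have := r.edges_subset_edgeSet hy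
      rwa [SimpleGraph.mem_edgeSet] at this
    have hyb : y = b := key y hyadj.symm
    have hnd : (SimpleGraph.Walk.cons h r).edges.Nodup := hq.isCircuit.isTrail.edges_nodup
    rw [SimpleGraph.Walk.edges_cons] at hnd
    have hns : s(c, w) ∉ r.edges := (List.nodup_cons.mp hnd).1
    rw [hyb, ← hwb, Sym2.eq_swap] at hy
    exact hns hy
  · have hpe : ∀ e ∈ p.edges, e ∈ G.edgeSet := by
      intro e hep
      have h1 := p.edges_subset_edgeSet hep
      rw [hG'def, SimpleGraph.edgeSet_sup] at h1
      rcases h1 with h1 | h1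
      · exact h1
      · rw [SimpleGraph.edgeSet_fromEdgeSet] at h1
        exact absurd (h1.1 ▸ hep) he
    exact hG (p.transfer G hpe) (hp.transfer hpe)

end AuxArea

section Aux2
open SimpleGraph List

variable {V : Type*}

def OldP (l : List (Finset V)) (k : ℕ) (u v : V) : Prop :=
  ∃ θ ∈ l.take k, u ∈ θ ∧ v ∈ θ

def EdgeIn (l : List (Finset V)) (k : ℕ) (e : Sym2 V) : Prop :=
  ∃ u v : V, u ≠ v ∧ e = s(u, v) ∧ OldP l k u v

lemma OldP.symm {l : List (Finset V)} {k u v} (h : OldP l k u v) : OldP l k v u := by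
  obtain ⟨θ, h1, h2, h3⟩ := h; exact ⟨θ, h1, h3, h2⟩

lemma edgeIn_pair {l : List (Finset V)} {k : ℕ} {u v : V} (h : EdgeIn l k s(u, v)) (huv : u ≠ v) :
    OldP l k u v := by
  obtain ⟨a, b, hab, he, hold⟩ := h
  rw [Sym2.eq_iff] at he
  rcases he with ⟨rfl, rfl⟩ | ⟨rfl, rfl⟩
  · exact hold
  · exact hold.symm

def vsetL [DecidableEq V] (l : List (Finset V)) (k : ℕ) : Finset V :=
  (l.take k).foldr (· ∪ ·) ∅

lemma mem_vsetL [DecidableEq V] {l : List (Finset V)} {k : ℕ} {v : V} :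
    v ∈ vsetL l k ↔ ∃ θ ∈ l.take k, v ∈ θ := by
  unfold vsetL
  induction l.take k with
  | nil => simp
  | cons a t ih => simp [ih]

def GoodSat (T es : List (Sym2 V)) : Prop :=
  ∀ i : Fin es.length, ∃ x y z : V,
    es.get i = s(x, y) ∧
    (SimpleGraph.fromEdgeSet {e | e ∈ T ++ es.take (i.val + 1)}).Adj x y ∧
    (SimpleGraph.fromEdgeSet {e | e ∈ T ++ es.take (i.val + 1)}).Adj y z ∧
    (SimpleGraph.fromEdgeSet {e | e ∈ T ++ es.take (i.val + 1)}).Adj z x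

def InvS [DecidableEq V] (l : List (Finset V)) (k : ℕ) (T es : List (Sym2 V)) : Prop :=
  (T ++ es).Nodup ∧
  (∀ e, e ∈ T ++ es ↔ EdgeIn l k e) ∧
  (SimpleGraph.fromEdgeSet {e | e ∈ T}).IsAcyclic ∧
  (∀ u ∈ vsetL l k, ∀ v ∈ vsetL l k,
    (SimpleGraph.fromEdgeSet {e | e ∈ T}).Reachable u v) ∧
  GoodSat T es

lemma goodsat_append {T T' es : List (Sym2 V)} (hsub : ∀ e ∈ T, e ∈ T') (h : GoodSat T es)
    {e₀ : Sym2 V} {x y z : V} (hxy : e₀ = s(x, y)) (h1 : x ≠ y) (h2 : y ≠ z) (h3 : z ≠ x)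
    (hx : s(x, y) ∈ T' ++ es ++ [e₀]) (hy : s(y, z) ∈ T' ++ es ++ [e₀])
    (hz : s(z, x) ∈ T' ++ es ++ [e₀]) :
    GoodSat T' (es ++ [e₀]) := by
  intro i
  have hilen : i.val < es.length + 1 := by
    have := i.2; simpa using this
  by_cases hi : i.val < es.length
  · obtain ⟨x', y', z', hget, ha1, ha2, ha3⟩ := h ⟨i.val, hi⟩
    have htake : (es ++ [e₀]).take (i.val + 1) = es.take (i.val + 1) :=
      List.take_append_of_le_length (by omega)
    have hget' : (es ++ [e₀]).get i = es.get ⟨i.val, hi⟩ := by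
      simp [List.get_eq_getElem, List.getElem_append_left hi]
    have hmono : ∀ e : Sym2 V, e ∈ T ++ es.take (i.val + 1) →
        e ∈ T' ++ (es ++ [e₀]).take (i.val + 1) := by
      intro e hemem
      rw [htake]
      rcases List.mem_append.mp hemem with hh | hh
      · exact List.mem_append.mpr (Or.inl (hsub e hh))
      · exact List.mem_append.mpr (Or.inr hh)
    refine ⟨x', y', z', hget'.trans hget, ?_, ?_, ?_⟩
    · exact (fromEdgeSet_adj _).mpr ⟨hmono _ ((fromEdgeSet_adj _).mp ha1).1,
        ((fromEdgeSet_adj _).mp ha1).2⟩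
    · exact (fromEdgeSet_adj _).mpr ⟨hmono _ ((fromEdgeSet_adj _).mp ha2).1,
        ((fromEdgeSet_adj _).mp ha2).2⟩
    · exact (fromEdgeSet_adj _).mpr ⟨hmono _ ((fromEdgeSet_adj _).mp ha3).1,
        ((fromEdgeSet_adj _).mp ha3).2⟩
  · have hi' : i.val = es.length := by omega
    have hget : (es ++ [e₀]).get i = e₀ := by
      simp [List.get_eq_getElem, List.getElem_append_right (le_of_eq hi'.symm), hi']
    have htake : (es ++ [e₀]).take (i.val + 1) = es ++ [e₀] :=
      List.take_of_length_le (by simp [hi'])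
    have hmem : ∀ e : Sym2 V, e ∈ T' ++ es ++ [e₀] →
        e ∈ T' ++ (es ++ [e₀]).take (i.val + 1) := by
      intro e hemem
      rw [htake, ← List.append_assoc]
      exact hemem
    exact ⟨x, y, z, hget.trans hxy,
      (fromEdgeSet_adj _).mpr ⟨hmem _ hx, h1⟩,
      (fromEdgeSet_adj _).mpr ⟨hmem _ hy, h2⟩,
      (fromEdgeSet_adj _).mpr ⟨hmem _ hz, h3⟩⟩

end Aux2


lemma exists_facet {V : Type*} (K : SComplex V) {σ : Finset V} (hσ : σ ∈ K.faces) :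
    ∃ ρ, K.IsFacet ρ ∧ σ ⊆ ρ := by
  obtain ⟨ρ, ⟨hρf, hσρ⟩, hmax⟩ := Set.Finite.exists_maximalFor id
    {τ : Finset V | τ ∈ K.faces ∧ σ ⊆ τ}
    (K.faces.finite_toSet.subset (fun τ hτ => hτ.1)) ⟨σ, hσ, subset_rfl⟩
  exact ⟨ρ, ⟨hρf, fun τ hτ hρτ => Finset.Subset.antisymm hρτ (hmax (j := τ) ⟨hτ, hσρ.trans hρτ⟩ hρτ)⟩, hσρ⟩

/-- A finite pure 2-dimensional shellable simplicial complex has a spanning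
tree of its 1-skeleton that is weakly `K₃`-saturated in the 1-skeleton. -/
theorem exists_spanning_tree_weaklyK3Saturated {V : Type*} [Fintype V] [DecidableEq V]
    (L : SComplex V) (hvert : ∀ v : V, ({v} : Finset V) ∈ L.faces)
    (hpure : L.PureDim 2) (hshell : L.Shellable 2) :
    ∃ G : SimpleGraph V, G ≤ L.skel1 ∧ G.IsTree ∧ WeaklyK3Saturated L.skel1 G := by
  classical
  obtain ⟨l, hnd, hfac, hsh⟩ := hshell
  have hfacet_card : ∀ θ ∈ l, θ.card = 3 := fun θ h => hpure.2 θ ((hfac θ).mp h)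
  have hfacet_face : ∀ θ ∈ l, θ ∈ L.faces := fun θ h => ((hfac θ).mp h).1
  have hpair_face : ∀ θ ∈ l, ∀ u ∈ θ, ∀ v ∈ θ, ({u, v} : Finset V) ∈ L.faces := by
    intro θ hθ u hu v hv
    exact L.down_closed θ (hfacet_face θ hθ) _
      (Finset.insert_subset_iff.mpr ⟨hu, Finset.singleton_subset_iff.mpr hv⟩)
      ⟨u, Finset.mem_insert_self u {v}⟩
  have hlen1 : 1 ≤ l.length := by
    obtain ⟨σ, hσ⟩ := hpure.1
    obtain ⟨ρ, hρ, _⟩ := exists_facet L hσ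
    have hmem : ρ ∈ l := (hfac ρ).mpr hρ
    exact List.length_pos_iff.mpr (List.ne_nil_of_mem hmem)
  have hget_mem_take : ∀ (j k : ℕ) (hj : j < l.length), j < k → l.get ⟨j, hj⟩ ∈ l.take k := by
    intro j k hj hjk
    rw [List.mem_take_iff_getElem]
    exact ⟨j, by omega, rfl⟩
  have htakesucc : ∀ (k : ℕ) (hk : k < l.length),
      l.take (k + 1) = l.take k ++ [l.get ⟨k, hk⟩] := by
    intro k hk
    rw [List.take_succ]
    simp [List.getElem?_eq_getElem hk]
  have hEdgeInsucc : ∀ (k : ℕ) (hk : k < l.length) (e : Sym2 V),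
      EdgeIn l (k + 1) e ↔ EdgeIn l k e ∨
        (∃ u v : V, u ≠ v ∧ e = s(u, v) ∧ u ∈ l.get ⟨k, hk⟩ ∧ v ∈ l.get ⟨k, hk⟩) := by
    intro k hk e
    constructor
    · rintro ⟨u, v, huv, rfl, θ, hθ, hu, hv⟩
      rw [htakesucc k hk, List.mem_append, List.mem_singleton] at hθ
      rcases hθ with hθ | rfl
      · exact Or.inl ⟨u, v, huv, rfl, θ, hθ, hu, hv⟩
      · exact Or.inr ⟨u, v, huv, rfl, hu, hv⟩
    · rintro (⟨u, v, huv, rfl, θ, hθ, hu, hv⟩ | ⟨u, v, huv, rfl, hu, hv⟩)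
      · refine ⟨u, v, huv, rfl, θ, ?_, hu, hv⟩
        rw [htakesucc k hk, List.mem_append]
        exact Or.inl hθ
      · refine ⟨u, v, huv, rfl, l.get ⟨k, hk⟩, ?_, hu, hv⟩
        rw [htakesucc k hk, List.mem_append, List.mem_singleton]
        exact Or.inr rfl
  have hVsucc : ∀ (k : ℕ) (hk : k < l.length) (v : V),
      v ∈ vsetL l (k + 1) ↔ v ∈ vsetL l k ∨ v ∈ l.get ⟨k, hk⟩ := by
    intro k hk v
    rw [mem_vsetL, htakesucc k hk]
    constructor
    · rintro ⟨θ, hθ, hv⟩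
      rcases List.mem_append.mp hθ with h | h
      · exact Or.inl (mem_vsetL.mpr ⟨θ, h, hv⟩)
      · rw [List.mem_singleton] at h
        subst h
        exact Or.inr hv
    · rintro (h | h)
      · obtain ⟨θ, hθ, hv⟩ := mem_vsetL.mp h
        exact ⟨θ, List.mem_append.mpr (Or.inl hθ), hv⟩
      · exact ⟨l.get ⟨k, hk⟩, List.mem_append.mpr (Or.inr (List.mem_singleton_self _)), h⟩
  have hOld_mem_vset : ∀ (k : ℕ) (u v : V), OldP l k u v → u ∈ vsetL l k ∧ v ∈ vsetL l k := by
    rintro k u v ⟨θ, hθ, hu, hv⟩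
    exact ⟨mem_vsetL.mpr ⟨θ, hθ, hu⟩, mem_vsetL.mpr ⟨θ, hθ, hv⟩⟩
  -- extraction from shelling: maximal old faces inside the current facet are edges
  have hextract : ∀ (k : ℕ) (hk : k < l.length), 1 ≤ k → ∀ σ0 : Finset V, σ0.Nonempty →
      σ0 ⊆ l.get ⟨k, hk⟩ → (∃ j : Fin l.length, j.val < k ∧ σ0 ⊆ l.get j) →
      ∃ x y : V, x ≠ y ∧ x ∈ l.get ⟨k, hk⟩ ∧ y ∈ l.get ⟨k, hk⟩ ∧ σ0 ⊆ {x, y} ∧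
        OldP l k x y := by
    intro k hk hk1 σ0 hne hsub hold
    set S : Set (Finset V) := {σ | (σ.Nonempty ∧ σ ⊆ l.get ⟨k, hk⟩ ∧
      ∃ j : Fin l.length, j < ⟨k, hk⟩ ∧ σ ⊆ l.get j) ∧ σ0 ⊆ σ} with hSdef
    have hSfin : S.Finite := ((l.get ⟨k, hk⟩).powerset.finite_toSet).subset
      (fun τ hτ => by simpa [Finset.mem_powerset] using hτ.1.2.1)
    have hSne : S.Nonempty := ⟨σ0, ⟨hne, hsub, by
        obtain ⟨j, hj, hj2⟩ := hold
        exact ⟨j, by rwa [Fin.lt_def], hj2⟩⟩, subset_rfl⟩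
    obtain ⟨τ, hτS, hmax⟩ := Set.Finite.exists_maximalFor id S hSfin hSne
    have hcard : τ.card = 2 := by
      refine (hsh ⟨k, hk⟩ hk1).2 τ hτS.1 ?_
      intro τ' hP hττ'
      exact Finset.Subset.antisymm hττ' (hmax (j := τ') ⟨hP, hτS.2.trans hττ'⟩ hττ')
    obtain ⟨x, y, hxy, hτeq⟩ := Finset.card_eq_two.mp hcard
    obtain ⟨j, hj, hτj⟩ := hτS.1.2.2
    have hxτ : x ∈ τ := by rw [hτeq]; exact Finset.mem_insert_self x {y}
    have hyτ : y ∈ τ := by rw [hτeq]; exact Finset.mem_insert_of_mem (Finset.mem_singleton_self y)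
    refine ⟨x, y, hxy, hτS.1.2.1 hxτ, hτS.1.2.1 hyτ, by rw [← hτeq]; exact hτS.2,
      ⟨l.get j, ?_, hτj hxτ, hτj hyτ⟩⟩
    have := hget_mem_take j.val k j.2 (by rwa [Fin.lt_def] at hj)
    simpa using this
  -- base case
  have hbase : ∃ T es : List (Sym2 V), InvS l 1 T es := by
    have h0 : 0 < l.length := hlen1
    have hθl : l.get ⟨0, h0⟩ ∈ l := by
      rw [List.get_eq_getElem]
      exact List.getElem_mem _
    obtain ⟨x, y, z, hxy, hxz, hyz, hθeq⟩ := Finset.card_eq_three.mp (hfacet_card _ hθl)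
    have hxθ : x ∈ l.get ⟨0, h0⟩ := by rw [hθeq]; simp
    have hyθ : y ∈ l.get ⟨0, h0⟩ := by rw [hθeq]; simp
    have hzθ : z ∈ l.get ⟨0, h0⟩ := by rw [hθeq]; simp
    have hmemθ : ∀ u ∈ l.get ⟨0, h0⟩, u = x ∨ u = y ∨ u = z := by
      intro u hu
      rw [hθeq] at hu
      simpa using hu
    have htake1 : ∀ θ' ∈ l.take 1, θ' = l.get ⟨0, h0⟩ := by
      intro θ' hθ'
      rw [htakesucc 0 h0] at hθ'
      simpa using hθ'
    have hmemtake : l.get ⟨0, h0⟩ ∈ l.take 1 := by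
      rw [htakesucc 0 h0]; simp
    refine ⟨[s(x, y), s(y, z)], [s(z, x)], ?_, ?_, ?_, ?_, ?_⟩
    · simp [List.nodup_cons, Sym2.eq_iff, hxy, hxz, hyz, Ne.symm hxy, Ne.symm hxz, Ne.symm hyz]
    · intro e
      constructor
      · intro he
        simp only [List.cons_append, List.nil_append, List.mem_cons, List.not_mem_nil,
          or_false] at he
        rcases he with rfl | rfl | rfl
        · exact ⟨x, y, hxy, rfl, l.get ⟨0, h0⟩, hmemtake, hxθ, hyθ⟩
        · exact ⟨y, z, hyz, rfl, l.get ⟨0, h0⟩, hmemtake, hyθ, hzθ⟩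
        · exact ⟨z, x, Ne.symm hxz, rfl, l.get ⟨0, h0⟩, hmemtake, hzθ, hxθ⟩
      · rintro ⟨u, v, huv, rfl, θ', hθ', hu, hv⟩
        have := htake1 θ' hθ'
        subst this
        rcases hmemθ u hu with rfl | rfl | rfl <;> rcases hmemθ v hv with rfl | rfl | rfl <;>
          first
            | exact absurd rfl huv
            | simp [Sym2.eq_iff]
    · have e1 : {e : Sym2 V | e ∈ ([s(x, y)] : List (Sym2 V))} = {s(x, y)} := by
        ext e; simp
      have hA1 : (SimpleGraph.fromEdgeSet {s(x, y)} : SimpleGraph V).IsAcyclic := by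
        have := isAcyclic_sup_pendant (G := (⊥ : SimpleGraph V)) SimpleGraph.isAcyclic_bot hxy
          (fun w h => h)
        simpa using this
      have heq : ([s(x, y), s(y, z)] : List (Sym2 V)) = [s(x, y)] ++ [s(y, z)] := rfl
      rw [heq, fromEdgeSet_list_append, e1]
      refine isAcyclic_sup_pendant hA1 hyz (fun w h => ?_)
      rw [SimpleGraph.fromEdgeSet_adj] at h
      have h1 := h.1
      simp only [Set.mem_singleton_iff, Sym2.eq_iff] at h1
      rcases h1 with ⟨h1, _⟩ | ⟨h1, _⟩
      · exact hxz h1.symm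
      · exact hyz h1.symm
    · have a1 : (SimpleGraph.fromEdgeSet {e : Sym2 V | e ∈ [s(x, y), s(y, z)]}).Adj x y :=
        (SimpleGraph.fromEdgeSet_adj _).mpr ⟨by simp, hxy⟩
      have a2 : (SimpleGraph.fromEdgeSet {e : Sym2 V | e ∈ [s(x, y), s(y, z)]}).Adj y z :=
        (SimpleGraph.fromEdgeSet_adj _).mpr ⟨by simp, hyz⟩
      have r1 := a1.reachable
      have r2 := a2.reachable
      intro u hu v hv
      obtain ⟨θu, hθu, hu2⟩ := mem_vsetL.mp hu
      obtain ⟨θv, hθv, hv2⟩ := mem_vsetL.mp hv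
      rw [htake1 θu hθu] at hu2
      rw [htake1 θv hθv] at hv2
      rcases hmemθ u hu2 with rfl | rfl | rfl <;> rcases hmemθ v hv2 with rfl | rfl | rfl <;>
        first
          | exact SimpleGraph.Reachable.refl _
          | exact r1
          | exact r2
          | exact r1.symm
          | exact r2.symm
          | exact r1.trans r2
          | exact (r1.trans r2).symm
    · intro i
      have hi0v : (i : ℕ) = 0 := Nat.lt_one_iff.mp i.2
      have hi0 : i = ⟨0, Nat.zero_lt_one⟩ := Fin.ext (by simpa using hi0v)
      subst hi0
      refine ⟨z, x, y, rfl, ?_, ?_, ?_⟩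
      · exact (SimpleGraph.fromEdgeSet_adj _).mpr ⟨by simp, Ne.symm hxz⟩
      · exact (SimpleGraph.fromEdgeSet_adj _).mpr ⟨by simp, hxy⟩
      · exact (SimpleGraph.fromEdgeSet_adj _).mpr ⟨by simp, hyz⟩
  -- inductive step
  have hstep : ∀ (k : ℕ) (hk : k < l.length), 1 ≤ k → ∀ T es : List (Sym2 V),
      InvS l k T es → ∃ T' es' : List (Sym2 V), InvS l (k + 1) T' es' := by
    intro k hk hk1 T es hInv
    obtain ⟨hnodup, hcov, hacy, hreach, hgood⟩ := hInv
    have hθl : l.get ⟨k, hk⟩ ∈ l := by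
      rw [List.get_eq_getElem]
      exact List.getElem_mem _
    have hθ3 : (l.get ⟨k, hk⟩).card = 3 := hfacet_card _ hθl
    obtain ⟨σ0, hσ0ne, hσ0sub, hσ0old⟩ := (hsh ⟨k, hk⟩ hk1).1
    obtain ⟨x, y, hxy, hxθ, hyθ, _, hOxy⟩ := hextract k hk hk1 σ0 hσ0ne hσ0sub (by
      obtain ⟨j, hj, h2⟩ := hσ0old
      exact ⟨j, by rwa [Fin.lt_def] at hj, h2⟩)
    have hxyθ : ({x, y} : Finset V) ⊆ l.get ⟨k, hk⟩ :=
      Finset.insert_subset_iff.mpr ⟨hxθ, Finset.singleton_subset_iff.mpr hyθ⟩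
    have hsd : ((l.get ⟨k, hk⟩) \ {x, y}).card = 1 := by
      rw [Finset.card_sdiff_of_subset hxyθ, hθ3, Finset.card_pair hxy]
    obtain ⟨z, hzeq⟩ := Finset.card_eq_one.mp hsd
    have hzmem : z ∈ (l.get ⟨k, hk⟩) \ {x, y} := by
      rw [hzeq]
      exact Finset.mem_singleton_self z
    have hzθ : z ∈ l.get ⟨k, hk⟩ := (Finset.mem_sdiff.mp hzmem).1
    have hznx : z ≠ x := by
      have h2 := (Finset.mem_sdiff.mp hzmem).2
      simp only [Finset.mem_insert, Finset.mem_singleton] at h2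
      tauto
    have hzny : z ≠ y := by
      have h2 := (Finset.mem_sdiff.mp hzmem).2
      simp only [Finset.mem_insert, Finset.mem_singleton] at h2
      tauto
    have hxz_ne : x ≠ z := Ne.symm hznx
    have hyz_ne : y ≠ z := Ne.symm hzny
    have hmemθ : ∀ u ∈ l.get ⟨k, hk⟩, u = x ∨ u = y ∨ u = z := by
      intro u hu
      by_cases h1 : u = x
      · exact Or.inl h1
      by_cases h2 : u = y
      · exact Or.inr (Or.inl h2)
      have : u ∈ (l.get ⟨k, hk⟩) \ {x, y} :=
        Finset.mem_sdiff.mpr ⟨hu, by simp [h1, h2]⟩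
      rw [hzeq] at this
      exact Or.inr (Or.inr (Finset.mem_singleton.mp this))
    have hpairclass : ∀ u v : V, u ∈ l.get ⟨k, hk⟩ → v ∈ l.get ⟨k, hk⟩ → u ≠ v →
        s(u, v) = s(x, y) ∨ s(u, v) = s(x, z) ∨ s(u, v) = s(y, z) := by
      intro u v hu hv huv
      rcases hmemθ u hu with rfl | rfl | rfl <;> rcases hmemθ v hv with rfl | rfl | rfl <;>
        first
          | exact absurd rfl huv
          | (simp only [Sym2.eq_iff]; tauto)
    have hcovsucc : ∀ e : Sym2 V, EdgeIn l (k + 1) e ↔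
        EdgeIn l k e ∨ e = s(x, y) ∨ e = s(x, z) ∨ e = s(y, z) := by
      intro e
      rw [hEdgeInsucc k hk e]
      constructor
      · rintro (h | ⟨u, v, huv, rfl, hu, hv⟩)
        · exact Or.inl h
        · rcases hpairclass u v hu hv huv with h | h | h <;> tauto
      · rintro (h | rfl | rfl | rfl)
        · exact Or.inl h
        · exact Or.inr ⟨x, y, hxy, rfl, hxθ, hyθ⟩
        · exact Or.inr ⟨x, z, hxz_ne, rfl, hxθ, hzθ⟩
        · exact Or.inr ⟨y, z, hyz_ne, rfl, hyθ, hzθ⟩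
    have hxv : x ∈ vsetL l k := (hOld_mem_vset k x y hOxy).1
    have hyv : y ∈ vsetL l k := (hOld_mem_vset k x y hOxy).2
    by_cases hOxz : OldP l k x z <;> by_cases hOyz : OldP l k y z
    · -- all edges old
      have hzv : z ∈ vsetL l k := (hOld_mem_vset k x z hOxz).2
      refine ⟨T, es, hnodup, ?_, hacy, ?_, hgood⟩
      · intro e
        rw [hcovsucc e]
        constructor
        · intro h
          exact Or.inl ((hcov e).mp h)
        · rintro (h | rfl | rfl | rfl)
          · exact (hcov e).mpr h
          · exact (hcov _).mpr ⟨x, y, hxy, rfl, hOxy⟩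
          · exact (hcov _).mpr ⟨x, z, hxz_ne, rfl, hOxz⟩
          · exact (hcov _).mpr ⟨y, z, hyz_ne, rfl, hOyz⟩
      · intro u hu v hv
        rw [hVsucc k hk] at hu hv
        have hu' : u ∈ vsetL l k := by
          rcases hu with h | h
          · exact h
          · rcases hmemθ u h with rfl | rfl | rfl
            exacts [hxv, hyv, hzv]
        have hv' : v ∈ vsetL l k := by
          rcases hv with h | h
          · exact h
          · rcases hmemθ v h with rfl | rfl | rfl
            exacts [hxv, hyv, hzv]
        exact hreach u hu' v hv'
    · -- xz old, yz new : add edge s(y,z) to es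
      have hzv : z ∈ vsetL l k := (hOld_mem_vset k x z hOxz).2
      have hnew : s(y, z) ∉ T ++ es := fun h => hOyz (edgeIn_pair ((hcov _).mp h) hyz_ne)
      refine ⟨T, es ++ [s(y, z)], ?_, ?_, hacy, ?_, ?_⟩
      · rw [← List.append_assoc]
        refine hnodup.append (List.nodup_singleton _) ?_
        intro a ha hb
        rw [List.mem_singleton] at hb
        subst hb
        exact hnew ha
      · intro e
        rw [hcovsucc e]
        constructor
        · intro h
          rw [← List.append_assoc, List.mem_append, List.mem_singleton] at h
          rcases h with h | rfl
          · exact Or.inl ((hcov e).mp h)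
          · exact Or.inr (Or.inr (Or.inr rfl))
        · intro h
          rw [← List.append_assoc, List.mem_append, List.mem_singleton]
          rcases h with h | rfl | rfl | rfl
          · exact Or.inl ((hcov e).mpr h)
          · exact Or.inl ((hcov _).mpr ⟨x, y, hxy, rfl, hOxy⟩)
          · exact Or.inl ((hcov _).mpr ⟨x, z, hxz_ne, rfl, hOxz⟩)
          · exact Or.inr rfl
      · intro u hu v hv
        rw [hVsucc k hk] at hu hv
        have hu' : u ∈ vsetL l k := by
          rcases hu with h | h
          · exact h
          · rcases hmemθ u h with rfl | rfl | rfl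
            exacts [hxv, hyv, hzv]
        have hv' : v ∈ vsetL l k := by
          rcases hv with h | h
          · exact h
          · rcases hmemθ v h with rfl | rfl | rfl
            exacts [hxv, hyv, hzv]
        exact hreach u hu' v hv'
      · refine goodsat_append (fun e he => he) hgood rfl hyz_ne hznx hxy ?_ ?_ ?_
        · exact List.mem_append_right _ (List.mem_singleton_self _)
        · refine List.mem_append_left _ ?_
          have : s(z, x) = s(x, z) := Sym2.eq_swap
          rw [this]
          exact (hcov _).mpr ⟨x, z, hxz_ne, rfl, hOxz⟩
        · exact List.mem_append_left _ ((hcov _).mpr ⟨x, y, hxy, rfl, hOxy⟩)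
    · -- yz old, xz new : add edge s(z,x) to es
      have hzv : z ∈ vsetL l k := (hOld_mem_vset k y z hOyz).2
      have hnew : s(z, x) ∉ T ++ es := fun h =>
        hOxz ((edgeIn_pair ((hcov _).mp h) hznx).symm)
      refine ⟨T, es ++ [s(z, x)], ?_, ?_, hacy, ?_, ?_⟩
      · rw [← List.append_assoc]
        refine hnodup.append (List.nodup_singleton _) ?_
        intro a ha hb
        rw [List.mem_singleton] at hb
        subst hb
        exact hnew ha
      · intro e
        rw [hcovsucc e]
        constructor
        · intro h
          rw [← List.append_assoc, List.mem_append, List.mem_singleton] at h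
          rcases h with h | rfl
          · exact Or.inl ((hcov e).mp h)
          · exact Or.inr (Or.inr (Or.inl Sym2.eq_swap))
        · intro h
          rw [← List.append_assoc, List.mem_append, List.mem_singleton]
          rcases h with h | rfl | rfl | rfl
          · exact Or.inl ((hcov e).mpr h)
          · exact Or.inl ((hcov _).mpr ⟨x, y, hxy, rfl, hOxy⟩)
          · exact Or.inr Sym2.eq_swap
          · exact Or.inl ((hcov _).mpr ⟨y, z, hyz_ne, rfl, hOyz⟩)
      · intro u hu v hv
        rw [hVsucc k hk] at hu hv
        have hu' : u ∈ vsetL l k := by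
          rcases hu with h | h
          · exact h
          · rcases hmemθ u h with rfl | rfl | rfl
            exacts [hxv, hyv, hzv]
        have hv' : v ∈ vsetL l k := by
          rcases hv with h | h
          · exact h
          · rcases hmemθ v h with rfl | rfl | rfl
            exacts [hxv, hyv, hzv]
        exact hreach u hu' v hv'
      · refine goodsat_append (fun e he => he) hgood rfl hznx hxy hyz_ne ?_ ?_ ?_
        · exact List.mem_append_right _ (List.mem_singleton_self _)
        · exact List.mem_append_left _ ((hcov _).mpr ⟨x, y, hxy, rfl, hOxy⟩)
        · exact List.mem_append_left _ ((hcov _).mpr ⟨y, z, hyz_ne, rfl, hOyz⟩)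
    · -- both xz and yz new : z is a new vertex
      have hznew : z ∉ vsetL l k := by
        intro hzv
        obtain ⟨θ'', hθ'', hzθ''⟩ := mem_vsetL.mp hzv
        obtain ⟨i0, hi0, hi0eq⟩ := List.mem_take_iff_getElem.mp hθ''
        have hi0len : i0 < l.length := by omega
        have hi0k : i0 < k := by omega
        obtain ⟨x', y', hxy', hx'θ, hy'θ, hzsub, hOld'⟩ := hextract k hk hk1 {z}
          (Finset.singleton_nonempty z) (Finset.singleton_subset_iff.mpr hzθ)
          ⟨⟨i0, hi0len⟩, hi0k, Finset.singleton_subset_iff.mpr (by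
            have : l.get ⟨i0, hi0len⟩ = θ'' := hi0eq
            rw [this]
            exact hzθ'')⟩
        have hz'' : z = x' ∨ z = y' := by
          have := hzsub (Finset.mem_singleton_self z)
          simpa using this
        rcases hz'' with rfl | rfl
        · rcases hmemθ y' hy'θ with rfl | rfl | rfl
          · exact hOxz hOld'.symm
          · exact hOyz hOld'.symm
          · exact hxy' rfl
        · rcases hmemθ x' hx'θ with rfl | rfl | rfl
          · exact hOxz hOld'
          · exact hOyz hOld'
          · exact hxy' rfl
      have hnewT : s(y, z) ∉ T ++ es := fun h => hOyz (edgeIn_pair ((hcov _).mp h) hyz_ne)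
      have hnewE : s(z, x) ∉ T ++ es := fun h =>
        hOxz ((edgeIn_pair ((hcov _).mp h) hznx).symm)
      have hne2 : s(y, z) ≠ s(z, x) := by
        intro h
        rcases Sym2.eq_iff.mp h with ⟨h1, _⟩ | ⟨h1, _⟩
        · exact hyz_ne h1
        · exact hxy h1.symm
      have hnodupT := (List.nodup_append'.mp hnodup).1
      have hnodupE := (List.nodup_append'.mp hnodup).2.1
      have hdisjTE := (List.nodup_append'.mp hnodup).2.2
      refine ⟨T ++ [s(y, z)], es ++ [s(z, x)], ?_, ?_, ?_, ?_, ?_⟩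
      · refine List.Nodup.append ?_ ?_ ?_
        · refine hnodupT.append (List.nodup_singleton _) ?_
          intro a ha hb
          rw [List.mem_singleton] at hb
          subst hb
          exact hnewT (List.mem_append_left _ ha)
        · refine hnodupE.append (List.nodup_singleton _) ?_
          intro a ha hb
          rw [List.mem_singleton] at hb
          subst hb
          exact hnewE (List.mem_append_right _ ha)
        · intro a ha hb
          rcases List.mem_append.mp ha with ha' | ha'
          · rcases List.mem_append.mp hb with hb' | hb'
            · exact hdisjTE ha' hb'
            · rw [List.mem_singleton] at hb'
              subst hb'
              exact hnewE (List.mem_append_left _ ha')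
          · rw [List.mem_singleton] at ha'
            subst ha'
            rcases List.mem_append.mp hb with hb' | hb'
            · exact hnewT (List.mem_append_right _ hb')
            · rw [List.mem_singleton] at hb'
              exact hne2 hb'
      · intro e
        rw [hcovsucc e]
        constructor
        · intro h
          rcases List.mem_append.mp h with h' | h'
          · rcases List.mem_append.mp h' with h'' | h''
            · exact Or.inl ((hcov e).mp (List.mem_append_left _ h''))
            · rw [List.mem_singleton] at h''
              subst h''
              exact Or.inr (Or.inr (Or.inr rfl))
          · rcases List.mem_append.mp h' with h'' | h''
            · exact Or.inl ((hcov e).mp (List.mem_append_right _ h''))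
            · rw [List.mem_singleton] at h''
              subst h''
              exact Or.inr (Or.inr (Or.inl Sym2.eq_swap))
        · intro h
          rcases h with h | rfl | rfl | rfl
          · rcases List.mem_append.mp ((hcov e).mpr h) with h' | h'
            · exact List.mem_append.mpr (Or.inl (List.mem_append.mpr (Or.inl h')))
            · exact List.mem_append.mpr (Or.inr (List.mem_append.mpr (Or.inl h')))
          · rcases List.mem_append.mp ((hcov _).mpr ⟨x, y, hxy, rfl, hOxy⟩) with h' | h'
            · exact List.mem_append.mpr (Or.inl (List.mem_append.mpr (Or.inl h')))
            · exact List.mem_append.mpr (Or.inr (List.mem_append.mpr (Or.inl h')))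
          · refine List.mem_append.mpr (Or.inr (List.mem_append.mpr (Or.inr ?_)))
            rw [List.mem_singleton]
            exact Sym2.eq_swap
          · exact List.mem_append.mpr (Or.inl (List.mem_append.mpr
              (Or.inr (List.mem_singleton_self _))))
      · rw [fromEdgeSet_list_append]
        refine isAcyclic_sup_pendant hacy hyz_ne ?_
        intro w hadj
        rw [SimpleGraph.fromEdgeSet_adj] at hadj
        have hin : s(z, w) ∈ T ++ es := List.mem_append_left _ hadj.1
        obtain ⟨u, v, huv, he, θ', hθ', hu, hv⟩ := (hcov _).mp hin
        have hzθ' : z ∈ θ' := by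
          rcases Sym2.eq_iff.mp he with ⟨h1, _⟩ | ⟨h1, _⟩
          · exact h1 ▸ hu
          · exact h1 ▸ hv
        exact hznew (mem_vsetL.mpr ⟨θ', hθ', hzθ'⟩)
      · intro u hu v hv
        rw [hVsucc k hk] at hu hv
        have hTle : SimpleGraph.fromEdgeSet {e : Sym2 V | e ∈ T} ≤
            SimpleGraph.fromEdgeSet {e : Sym2 V | e ∈ T ++ [s(y, z)]} := by
          apply SimpleGraph.fromEdgeSet_mono
          intro e he
          exact List.mem_append_left _ he
        have hadjyz : (SimpleGraph.fromEdgeSet {e : Sym2 V | e ∈ T ++ [s(y, z)]}).Adj y z :=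
          (SimpleGraph.fromEdgeSet_adj _).mpr
            ⟨List.mem_append_right _ (List.mem_singleton_self _), hyz_ne⟩
        have hz2 : ∀ w, w ∈ vsetL l k →
            (SimpleGraph.fromEdgeSet {e : Sym2 V | e ∈ T ++ [s(y, z)]}).Reachable w z :=
          fun w hw => ((hreach w hw y hyv).mono hTle).trans hadjyz.reachable
        have hresolve : ∀ w : V, (w ∈ vsetL l k ∨ w ∈ l.get ⟨k, hk⟩) →
            w ∈ vsetL l k ∨ w = z := by
          intro w hw
          rcases hw with h | h
          · exact Or.inl h
          · rcases hmemθ w h with rfl | rfl | rfl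
            exacts [Or.inl hxv, Or.inl hyv, Or.inr rfl]
        rcases hresolve u hu with hu' | rfl <;> rcases hresolve v hv with hv' | rfl
        · exact (hreach u hu' v hv').mono hTle
        · exact hz2 u hu'
        · exact (hz2 v hv').symm
        · exact SimpleGraph.Reachable.refl _
      · refine goodsat_append (fun e he => List.mem_append_left _ he) hgood rfl hznx hxy
          hyz_ne ?_ ?_ ?_
        · exact List.mem_append_right _ (List.mem_singleton_self _)
        · refine List.mem_append_left _ ?_
          rcases List.mem_append.mp ((hcov _).mpr ⟨x, y, hxy, rfl, hOxy⟩) with h' | h'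
          · exact List.mem_append_left _ (List.mem_append_left _ h')
          · exact List.mem_append_right _ h'
        · exact List.mem_append_left _ (List.mem_append_left _
            (List.mem_append_right _ (List.mem_singleton_self _)))
  -- main induction
  have hmain : ∀ k : ℕ, 1 ≤ k → k ≤ l.length → ∃ T es : List (Sym2 V), InvS l k T es := by
    intro k
    induction k with
    | zero => intro h; omega
    | succ n ih =>
      intro _ hk
      by_cases hn : n = 0
      · subst hn
        simpa using hbase
      · obtain ⟨T, es, hInv⟩ := ih (by omega) (by omega)
        exact hstep n (by omega) (by omega) T es hInv
  obtain ⟨T, es, hnodup, hcov, hacy, hreach, hgood⟩ := hmain l.length hlen1 le_rfl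
  have hdisj : T.Disjoint es := (List.nodup_append'.mp hnodup).2.2
  -- every vertex is covered
  have huniv : ∀ v : V, v ∈ vsetL l l.length := by
    intro v
    obtain ⟨ρ, hρ, hsub⟩ := exists_facet L (hvert v)
    refine mem_vsetL.mpr ⟨ρ, ?_, Finset.singleton_subset_iff.mp hsub⟩
    rw [List.take_length]
    exact (hfac ρ).mpr hρ
  -- edges of the skeleton are exactly EdgeIn at stage l.length
  have hskel : ∀ e : Sym2 V, EdgeIn l l.length e ↔ e ∈ (L.skel1).edgeSet := by
    intro e
    induction e using Sym2.ind with
    | _ u v =>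
      constructor
      · intro h
        obtain ⟨a, b, hab, he, θ', hθ', ha, hb⟩ := h
        rw [List.take_length] at hθ'
        have hu : u ∈ θ' ∧ v ∈ θ' := by
          rcases Sym2.eq_iff.mp he with ⟨rfl, rfl⟩ | ⟨rfl, rfl⟩
          · exact ⟨ha, hb⟩
          · exact ⟨hb, ha⟩
        have hne : u ≠ v := by
          rcases Sym2.eq_iff.mp he with ⟨rfl, rfl⟩ | ⟨rfl, rfl⟩
          · exact hab
          · exact hab.symm
        exact (SimpleGraph.mem_edgeSet _).mpr ⟨hne, hpair_face θ' hθ' u hu.1 v hu.2⟩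
      · intro h
        have hadj := (SimpleGraph.mem_edgeSet _).mp h
        obtain ⟨hne, hf⟩ := hadj
        obtain ⟨ρ, hρ, hsub⟩ := exists_facet L hf
        refine ⟨u, v, hne, rfl, ρ, ?_, ?_, ?_⟩
        · rw [List.take_length]
          exact (hfac ρ).mpr hρ
        · exact hsub (Finset.mem_insert_self u {v})
        · exact hsub (Finset.mem_insert_of_mem (Finset.mem_singleton_self v))
  set G : SimpleGraph V := SimpleGraph.fromEdgeSet {e : Sym2 V | e ∈ T} with hGdef
  have hGedge : G.edgeSet = {e : Sym2 V | e ∈ T} := by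
    rw [hGdef, SimpleGraph.edgeSet_fromEdgeSet]
    ext e
    simp only [Set.mem_diff, Set.mem_setOf_eq]
    constructor
    · exact fun h => h.1
    · intro he
      refine ⟨he, ?_⟩
      obtain ⟨a, b, hab, hee, _⟩ := (hcov e).mp (List.mem_append_left _ he)
      rw [hee]
      exact fun hd => hab (Sym2.mk_isDiag_iff.mp hd)
  have hGle : G ≤ L.skel1 := by
    intro u v h
    rw [hGdef, SimpleGraph.fromEdgeSet_adj] at h
    have : s(u, v) ∈ (L.skel1).edgeSet :=
      (hskel _).mp ((hcov _).mp (List.mem_append_left _ h.1))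
    exact (SimpleGraph.mem_edgeSet _).mp this
  have hVne : Nonempty V := by
    obtain ⟨σ, hσ⟩ := hpure.1
    obtain ⟨v0, _⟩ := L.nonempty_mem σ hσ
    exact ⟨v0⟩
  refine ⟨G, hGle, ?_, es, hGle, (List.nodup_append.mp hnodup).2.1, ?_, ?_⟩
  · -- tree
    constructor
    · rw [SimpleGraph.connected_iff]
      exact ⟨fun u v => hreach u (huniv u) v (huniv v), hVne⟩
    · exact hacy
  · -- es is exactly the missing edges
    intro e
    constructor
    · intro he
      refine ⟨(hskel e).mp ((hcov e).mp (List.mem_append_right _ he)), ?_⟩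
      rw [hGedge]
      exact fun hT => hdisj hT he
    · rintro ⟨hE, hnG⟩
      rcases List.mem_append.mp ((hcov e).mpr ((hskel e).mpr hE)) with h | h
      · exact absurd (by rw [hGedge]; exact h) hnG
      · exact h
  · -- triangles
    intro i
    obtain ⟨x, y, z, hget, h1, h2, h3⟩ := hgood i
    have hEq : G ⊔ SimpleGraph.fromEdgeSet {e : Sym2 V | e ∈ es.take (i.val + 1)} =
        SimpleGraph.fromEdgeSet {e : Sym2 V | e ∈ T ++ es.take (i.val + 1)} := by
      rw [hGdef]
      ext a b
      simp only [SimpleGraph.sup_adj, SimpleGraph.fromEdgeSet_adj, Set.mem_setOf_eq,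
        List.mem_append]
      tauto
    exact ⟨x, y, z, hget, by rw [hEq]; exact h1, by rw [hEq]; exact h2, by rw [hEq]; exact h3⟩
end

section
/- Let L be a finite pure 2-dimensional flag simplicial complex, let G be a spanning tree of the 1-skeleton L^(1) that is weakly K_3-saturated in L^(1) with witnessing edge sequence e_1,…,e_m, and for each i let J_i be a copy of K_3 containing e_i created at step i, with θ_i the 2-dimensional face of L induced by the vertex set of J_i. Then the faces θ_1,…,θ_m are pairwise distinct, and the subcomplex of L consisting of all vertices and edges of L together with the faces θ_1,…,θ_m collapses to G. -/
namespace ThetaAux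

variable {V : Type*} [DecidableEq V]

lemma subset_pair {s : Finset V} {a b : V} (h : s ⊆ {a, b}) :
    s = ∅ ∨ s = {a} ∨ s = {b} ∨ s = {a, b} := by
  by_cases ha : a ∈ s <;> by_cases hb : b ∈ s
  · right; right; right
    refine Finset.Subset.antisymm h ?_
    exact Finset.insert_subset ha (Finset.singleton_subset_iff.mpr hb)
  · right; left
    have hs : s ⊆ {a} := by
      intro x hx
      rcases Finset.mem_insert.mp (h hx) with rfl | hx'
      · exact Finset.mem_singleton_self x
      · exact absurd (Finset.mem_singleton.mp hx' ▸ hx) hb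
    rcases Finset.subset_singleton_iff.mp hs with rfl | rfl
    · exact absurd ha (by simp)
    · rfl
  · right; right; left
    have hs : s ⊆ {b} := by
      intro x hx
      rcases Finset.mem_insert.mp (h hx) with rfl | hx'
      · exact absurd hx ha
      · exact hx'
    rcases Finset.subset_singleton_iff.mp hs with rfl | rfl
    · exact absurd hb (by simp)
    · rfl
  · left
    refine Finset.eq_empty_of_forall_notMem fun x hx => ?_
    rcases Finset.mem_insert.mp (h hx) with rfl | hx'
    · exact ha hx
    · exact hb (Finset.mem_singleton.mp hx' ▸ hx)

lemma subset_triple {s : Finset V} {a b c : V} (h : s ⊆ {a, b, c}) :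
    s = ∅ ∨ s = {a} ∨ s = {b} ∨ s = {c} ∨ s = {a, b} ∨ s = {a, c} ∨ s = {b, c} ∨ s = {a, b, c} := by
  by_cases ha : a ∈ s
  · have h' : s.erase a ⊆ {b, c} := Finset.subset_insert_iff.mp h
    have hins : insert a (s.erase a) = s := Finset.insert_erase ha
    rcases subset_pair h' with he | he | he | he <;> rw [he] at hins
    · right; left; rw [← hins]; simp
    · right; right; right; right; left; rw [← hins]
    · right; right; right; right; right; left; rw [← hins]
    · right; right; right; right; right; right; right; rw [← hins]
  · have h' : s ⊆ {b, c} := by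
      intro x hx
      rcases Finset.mem_insert.mp (h hx) with rfl | hx'
      · exact absurd hx ha
      · exact hx'
    rcases subset_pair h' with he | he | he | he
    · exact Or.inl he
    · exact Or.inr (Or.inr (Or.inl he))
    · exact Or.inr (Or.inr (Or.inr (Or.inl he)))
    · exact Or.inr (Or.inr (Or.inr (Or.inr (Or.inr (Or.inr (Or.inl he))))))

lemma sym2_of_pair_subset_triple {a b p q r : V} (hab : a ≠ b)
    (h : ({a, b} : Finset V) ⊆ {p, q, r}) :
    s(a, b) = s(p, q) ∨ s(a, b) = s(q, r) ∨ s(a, b) = s(p, r) := by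
  have ha : a = p ∨ a = q ∨ a = r := by
    have := h (Finset.mem_insert_self a {b}); simpa using this
  have hb : b = p ∨ b = q ∨ b = r := by
    have := h (by simp : b ∈ ({a, b} : Finset V)); simpa using this
  rcases ha with rfl | rfl | rfl <;> rcases hb with rfl | rfl | rfl <;>
    first
      | exact absurd rfl hab
      | exact Or.inl rfl
      | exact Or.inl Sym2.eq_swap
      | exact Or.inr (Or.inl rfl)
      | exact Or.inr (Or.inl Sym2.eq_swap)
      | exact Or.inr (Or.inr rfl)
      | exact Or.inr (Or.inr Sym2.eq_swap)

lemma pair_finset_eq_of_sym2 {a b c d : V} (h : s(a, b) = s(c, d)) :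
    ({a, b} : Finset V) = {c, d} := by
  rcases Sym2.eq_iff.mp h with ⟨rfl, rfl⟩ | ⟨rfl, rfl⟩
  · rfl
  · exact Finset.pair_comm a b

lemma sym2_eq_of_pair_eq {a b c d : V} (hab : a ≠ b)
    (h : ({a, b} : Finset V) = {c, d}) : s(a, b) = s(c, d) := by
  have hc : a = c ∨ a = d := by
    have : a ∈ ({c, d} : Finset V) := h ▸ Finset.mem_insert_self a {b}
    simpa using this
  have hd : b = c ∨ b = d := by
    have : b ∈ ({c, d} : Finset V) := h ▸ (by simp : b ∈ ({a, b} : Finset V))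
    simpa using this
  rcases hc with rfl | rfl <;> rcases hd with rfl | rfl
  · exact absurd rfl hab
  · rfl
  · exact Sym2.eq_swap
  · exact absurd rfl hab

lemma mem_take_iff {α : Type*} {l : List α} {n : ℕ} {e : α} :
    e ∈ l.take n ↔ ∃ i : Fin l.length, (i : ℕ) < n ∧ l.get i = e := by
  rw [List.mem_take_iff_getElem]
  constructor
  · rintro ⟨i, hm, hie⟩
    exact ⟨⟨i, (lt_inf_iff.mp hm).2⟩, (lt_inf_iff.mp hm).1, hie⟩
  · rintro ⟨i, hn, hie⟩
    exact ⟨i.val, lt_inf_iff.mpr ⟨hn, i.isLt⟩, hie⟩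

end ThetaAux

namespace ThetaAux

noncomputable def mkC (V : Type*) [Fintype V] [DecidableEq V] (P : Finset V → Prop)
    (h1 : ∀ σ, P σ → σ.Nonempty)
    (h2 : ∀ σ, P σ → ∀ τ, τ ⊆ σ → τ.Nonempty → P τ) : SComplex V :=
  letI := Classical.decPred P
  { faces := Finset.univ.filter P
    nonempty_mem := fun σ hσ => h1 σ (Finset.mem_filter.mp hσ).2
    down_closed := fun σ hσ τ hτσ hτ =>
      Finset.mem_filter.mpr ⟨Finset.mem_univ τ, h2 σ (Finset.mem_filter.mp hσ).2 τ hτσ hτ⟩ }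

lemma mem_mkC {V : Type*} [Fintype V] [DecidableEq V] {P : Finset V → Prop}
    {h1 : ∀ σ, P σ → σ.Nonempty}
    {h2 : ∀ σ, P σ → ∀ τ, τ ⊆ σ → τ.Nonempty → P τ} {ρ : Finset V} :
    ρ ∈ (mkC V P h1 h2).faces ↔ P ρ := by
  letI := Classical.decPred P
  simp [mkC, Finset.mem_filter]

def stepPred {V : Type*} [DecidableEq V] (G : SimpleGraph V) (es : List (Sym2 V))
    (θ : Fin es.length → Finset V) (k : ℕ) (ρ : Finset V) : Prop :=
  (∃ v : V, ρ = {v}) ∨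
  (∃ u v : V, ρ = {u, v} ∧ u ≠ v ∧ (G.Adj u v ∨ s(u, v) ∈ es.take k)) ∨
  (∃ i : Fin es.length, (i : ℕ) < k ∧ ρ = θ i)

end ThetaAux

open ThetaAux in
/-- Let `L` be a finite pure 2-dimensional flag complex, `G` a spanning tree
of `L⁽¹⁾` weakly `K₃`-saturated in `L⁽¹⁾` with witnessing edge sequence `es`, and for each
`i` let `θ i = {x i, y i, z i}` be the 2-face of `L` induced by the vertex set of the copy
of `K₃` created at step `i`. Then the `θ i` are pairwise distinct, and the subcomplex of
`L` consisting of all vertices and edges of `L` together with the `θ i` collapses to `G`. -/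
theorem theta_injective_and_collapsesTo_tree {V : Type*} [Fintype V] [DecidableEq V]
    (L : SComplex V) (hvert : ∀ v : V, ({v} : Finset V) ∈ L.faces)
    (hpure : L.PureDim 2) (hflag : L.Flag)
    (G : SimpleGraph V) (hGtree : G.IsTree)
    (es : List (Sym2 V)) (hwit : WitnessesWeakK3Sat L.skel1 G es)
    (x y z : Fin es.length → V)
    (htri : ∀ i : Fin es.length,
      es.get i = s(x i, y i) ∧
      (G ⊔ SimpleGraph.fromEdgeSet {e | e ∈ es.take (i.val + 1)}).Adj (x i) (y i) ∧
      (G ⊔ SimpleGraph.fromEdgeSet {e | e ∈ es.take (i.val + 1)}).Adj (y i) (z i) ∧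
      (G ⊔ SimpleGraph.fromEdgeSet {e | e ∈ es.take (i.val + 1)}).Adj (z i) (x i))
    (θ : Fin es.length → Finset V)
    (hθ : ∀ i : Fin es.length, θ i = ({x i, y i, z i} : Finset V)) :
    Function.Injective θ ∧
    ∃ M GC : SComplex V,
      (∀ ρ, ρ ∈ M.faces ↔ ((ρ ∈ L.faces ∧ ρ.card ≤ 2) ∨ ∃ i : Fin es.length, ρ = θ i)) ∧
      (∀ ρ, ρ ∈ GC.faces ↔
        ((∃ v : V, ρ = {v}) ∨ ∃ u v : V, G.Adj u v ∧ ρ = ({u, v} : Finset V))) ∧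
      M.CollapsesTo GC := by
  
  classical
  obtain ⟨hle, hnodup, hmem_es, _⟩ := hwit
  -- basic distinctness facts
  have hne : ∀ i : Fin es.length, x i ≠ y i ∧ y i ≠ z i ∧ z i ≠ x i :=
    fun i => ⟨(htri i).2.1.ne, (htri i).2.2.1.ne, (htri i).2.2.2.ne⟩
  have hθcard : ∀ i : Fin es.length, (θ i).card = 3 := by
    intro i
    rw [hθ i]
    exact Finset.card_eq_three.mpr
      ⟨x i, y i, z i, (hne i).1, (hne i).2.2.symm, (hne i).2.1, rfl⟩
  have hsubself : ∀ i : Fin es.length, ({x i, y i} : Finset V) ⊆ θ i := by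
    intro i
    rw [hθ i]
    exact Finset.insert_subset_insert _
      (Finset.singleton_subset_iff.mpr (Finset.mem_insert_self _ _))
  -- the key edge facts
  have hgetG : ∀ i : Fin es.length, es.get i ∉ G.edgeSet := by
    intro i
    exact ((hmem_es _).mp (List.get_mem es i)).2
  have hgetT : ∀ (i : Fin es.length) (n : ℕ), n ≤ (i : ℕ) → es.get i ∉ es.take n := by
    intro i n hn hmemt
    obtain ⟨j, hj, hje⟩ := mem_take_iff.mp hmemt
    have hji : j = i := hnodup.get_inj_iff.mp hje
    subst hji
    omega
  have hedge : ∀ (i : Fin es.length) (e : Sym2 V),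
      (e = s(x i, y i) ∨ e = s(y i, z i) ∨ e = s(x i, z i)) →
      e ∈ G.edgeSet ∨ e ∈ es.take ((i : ℕ) + 1) := by
    intro i e he
    obtain ⟨hget, hxy, hyz, hzx⟩ := htri i
    rcases he with rfl | rfl | rfl
    · rcases (SimpleGraph.sup_adj _ _ _ _).mp hxy with h | h
      · exact Or.inl h
      · exact Or.inr (SimpleGraph.fromEdgeSet_adj _ |>.mp h).1
    · rcases (SimpleGraph.sup_adj _ _ _ _).mp hyz with h | h
      · exact Or.inl h
      · exact Or.inr (SimpleGraph.fromEdgeSet_adj _ |>.mp h).1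
    · rw [Sym2.eq_swap]
      rcases (SimpleGraph.sup_adj _ _ _ _).mp hzx with h | h
      · exact Or.inl h
      · exact Or.inr (SimpleGraph.fromEdgeSet_adj _ |>.mp h).1
  have hkey : ∀ i j : Fin es.length, (j : ℕ) < (i : ℕ) →
      ¬ (({x i, y i} : Finset V) ⊆ θ j) := by
    intro i j hji hsub
    rw [hθ j] at hsub
    have hexy : es.get i = s(x i, y i) := (htri i).1
    have : s(x i, y i) ∈ G.edgeSet ∨ s(x i, y i) ∈ es.take ((j : ℕ) + 1) := by
      rcases sym2_of_pair_subset_triple (hne i).1 hsub with h | h | h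
      · exact hedge j _ (Or.inl h)
      · exact hedge j _ (Or.inr (Or.inl h))
      · exact hedge j _ (Or.inr (Or.inr h))
    rcases this with h | h
    · exact hgetG i (hexy ▸ h)
    · exact hgetT i ((j : ℕ) + 1) (by omega) (hexy ▸ h)
  -- injectivity
  have hinj : Function.Injective θ := by
    intro i j h
    by_contra hij
    rcases Ne.lt_or_gt hij with hlt | hlt
    · exact hkey j i hlt (by rw [h]; exact hsubself j)
    · exact hkey i j hlt (by rw [← h]; exact hsubself i)
  -- the complexes
  have hP1 : ∀ k σ, stepPred G es θ k σ → σ.Nonempty := by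
    rintro k σ (⟨v, rfl⟩ | ⟨u, v, rfl, _⟩ | ⟨i, _, rfl⟩)
    · exact Finset.singleton_nonempty v
    · exact Finset.insert_nonempty _ _
    · rw [hθ i]; exact Finset.insert_nonempty _ _
  have hmono : ∀ (k k' : ℕ), k ≤ k' → ∀ e : Sym2 V, e ∈ es.take k → e ∈ es.take k' := by
    intro k k' hk e he
    obtain ⟨a, ha, hae⟩ := mem_take_iff.mp he
    exact mem_take_iff.mpr ⟨a, by omega, hae⟩
  have hP2 : ∀ k σ, stepPred G es θ k σ → ∀ τ, τ ⊆ σ → τ.Nonempty → stepPred G es θ k τ := by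
    rintro k σ hσ τ hτσ hτ
    rcases hσ with ⟨v, rfl⟩ | ⟨u, v, rfl, huv, hGe⟩ | ⟨i, hik, rfl⟩
    · rcases Finset.subset_singleton_iff.mp hτσ with rfl | rfl
      · exact absurd hτ (by simp)
      · exact Or.inl ⟨v, rfl⟩
    · rcases subset_pair hτσ with rfl | rfl | rfl | rfl
      · exact absurd hτ (by simp)
      · exact Or.inl ⟨u, rfl⟩
      · exact Or.inl ⟨v, rfl⟩
      · exact Or.inr (Or.inl ⟨u, v, rfl, huv, hGe⟩)
    · rw [hθ i] at hτσ
      have hip : ∀ a b : V,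
          (s(a, b) = s(x i, y i) ∨ s(a, b) = s(y i, z i) ∨ s(a, b) = s(x i, z i)) → a ≠ b →
          stepPred G es θ k ({a, b} : Finset V) := by
        intro a b he hab
        refine Or.inr (Or.inl ⟨a, b, rfl, hab, ?_⟩)
        rcases hedge i _ he with h | h
        · exact Or.inl ((SimpleGraph.mem_edgeSet _).mp h)
        · exact Or.inr (hmono _ _ (by omega) _ h)
      rcases subset_triple hτσ with rfl | rfl | rfl | rfl | rfl | rfl | rfl | rfl
      · exact absurd hτ (by simp)
      · exact Or.inl ⟨_, rfl⟩
      · exact Or.inl ⟨_, rfl⟩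
      · exact Or.inl ⟨_, rfl⟩
      · exact hip _ _ (Or.inl rfl) (hne i).1
      · exact hip _ _ (Or.inr (Or.inr rfl)) (hne i).2.2.symm
      · exact hip _ _ (Or.inr (Or.inl rfl)) (hne i).2.1
      · exact Or.inr (Or.inr ⟨i, hik, (hθ i).symm⟩)
  let M : ℕ → SComplex V := fun k => mkC V (stepPred G es θ k) (hP1 k) (hP2 k)
  have hMmem : ∀ (k : ℕ) (ρ : Finset V), ρ ∈ (M k).faces ↔ stepPred G es θ k ρ :=
    fun k ρ => mem_mkC
  have hcard3 : ∀ k ρ, stepPred G es θ k ρ → ρ.card ≤ 3 := by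
    rintro k ρ (⟨v, rfl⟩ | ⟨u, v, rfl, huv, _⟩ | ⟨i, _, rfl⟩)
    · simp
    · rw [Finset.card_pair huv]; omega
    · rw [hθcard i]
  -- the elementary collapse step
  have hstep : ∀ k : ℕ, k < es.length → SComplex.ElemCollapse (M (k + 1)) (M k) := by
    intro k hk
    set i : Fin es.length := ⟨k, hk⟩ with hidef
    have hival : (i : ℕ) = k := rfl
    have hexy : es.get i = s(x i, y i) := (htri i).1
    refine ⟨{x i, y i}, θ i, ?_, ⟨?_, ?_⟩, ?_, hsubself i, ?_, ?_⟩
    · -- τ ∈ faces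
      refine (hMmem _ _).mpr (Or.inr (Or.inl ⟨x i, y i, rfl, (hne i).1, Or.inr ?_⟩))
      rw [← hexy]
      exact mem_take_iff.mpr ⟨i, by omega, rfl⟩
    · -- θ i ∈ faces
      exact (hMmem _ _).mpr (Or.inr (Or.inr ⟨i, by omega, rfl⟩))
    · -- θ i maximal
      intro ρ hρ hsub
      exact Finset.eq_of_subset_of_card_le hsub
        (by rw [hθcard i]; exact hcard3 _ _ ((hMmem _ _).mp hρ))
    · -- τ ≠ θ i
      intro h
      have h2 := hθcard i
      rw [← h, Finset.card_pair (hne i).1] at h2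
      omega
    · -- unique facet containing τ
      intro ρ hρfacet hτρ
      rcases (hMmem _ _).mp hρfacet.1 with ⟨v, rfl⟩ | ⟨u, v, rfl, huv, _⟩ | ⟨j, hjk, rfl⟩
      · have := Finset.card_le_card hτρ
        rw [Finset.card_pair (hne i).1, Finset.card_singleton] at this
        omega
      · exfalso
        have hρτ : ({x i, y i} : Finset V) = {u, v} :=
          Finset.eq_of_subset_of_card_le hτρ
            (by rw [Finset.card_pair huv, Finset.card_pair (hne i).1])
        have hsub2 : ({u, v} : Finset V) ⊆ θ i := hρτ ▸ hsubself i
        have heq := hρfacet.2 (θ i) ((hMmem _ _).mpr (Or.inr (Or.inr ⟨i, by omega, rfl⟩))) hsub2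
        have h2 := hθcard i
        rw [← heq, Finset.card_pair huv] at h2
        omega
      · by_cases hji : (j : ℕ) = k
        · have : j = i := Fin.ext hji
          rw [this]
        · exact absurd hτρ (hkey i j (by omega))
    · -- the removal description
      intro ρ
      rw [hMmem, hMmem]
      constructor
      · intro hρ
        constructor
        · rcases hρ with h | ⟨u, v, rfl, huv, hGe⟩ | ⟨j, hj, rfl⟩
          · exact Or.inl h
          · refine Or.inr (Or.inl ⟨u, v, rfl, huv, ?_⟩)
            rcases hGe with h | h
            · exact Or.inl h
            · exact Or.inr (hmono _ _ (by omega) _ h)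
          · exact Or.inr (Or.inr ⟨j, by omega, rfl⟩)
        · intro hτρ
          rcases hρ with ⟨v, rfl⟩ | ⟨u, v, rfl, huv, hGe⟩ | ⟨j, hj, rfl⟩
          · have := Finset.card_le_card hτρ
            rw [Finset.card_pair (hne i).1, Finset.card_singleton] at this
            omega
          · have hρτ : ({x i, y i} : Finset V) = {u, v} :=
              Finset.eq_of_subset_of_card_le hτρ
                (by rw [Finset.card_pair huv, Finset.card_pair (hne i).1])
            have hsuv : s(u, v) = es.get i := by
              rw [hexy]
              exact (sym2_eq_of_pair_eq (hne i).1 hρτ).symm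
            rcases hGe with h | h
            · exact hgetG i (hsuv ▸ h)
            · exact hgetT i k (by omega) (hsuv ▸ h)
          · exact hkey i j (by omega) hτρ
      · rintro ⟨hρ, hnτ⟩
        rcases hρ with h | ⟨u, v, rfl, huv, hGe⟩ | ⟨j, hj, rfl⟩
        · exact Or.inl h
        · refine Or.inr (Or.inl ⟨u, v, rfl, huv, ?_⟩)
          rcases hGe with h | h
          · exact Or.inl h
          · obtain ⟨a, ha, hae⟩ := mem_take_iff.mp h
            by_cases hak : (a : ℕ) = k
            · exfalso
              have hai : a = i := Fin.ext hak
              have hsuv : s(u, v) = s(x i, y i) := by rw [← hae, hai, hexy]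
              have hpe : ({u, v} : Finset V) = {x i, y i} := pair_finset_eq_of_sym2 hsuv
              exact hnτ (hpe ▸ Finset.Subset.refl _)
            · exact Or.inr (mem_take_iff.mpr ⟨a, by omega, hae⟩)
        · by_cases hjk : (j : ℕ) = k
          · exfalso
            have : j = i := Fin.ext hjk
            exact hnτ (by rw [this]; exact hsubself i)
          · exact Or.inr (Or.inr ⟨j, by omega, rfl⟩)
  -- the collapsing chain
  have hchain : ∀ k : ℕ, k ≤ es.length → SComplex.CollapsesTo (M k) (M 0) := by
    intro k
    induction k with
    | zero => intro _; exact Relation.ReflTransGen.refl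
    | succ n ih =>
      intro h
      exact Relation.ReflTransGen.head (hstep n (by omega)) (ih (by omega))
  refine ⟨hinj, M es.length, M 0, ?_, ?_, hchain es.length le_rfl⟩
  · intro ρ
    rw [hMmem]
    constructor
    · rintro (⟨v, rfl⟩ | ⟨u, v, rfl, huv, hGe⟩ | ⟨i, _, rfl⟩)
      · exact Or.inl ⟨hvert v, by simp⟩
      · refine Or.inl ⟨?_, by rw [Finset.card_pair huv]⟩
        rcases hGe with h | h
        · exact (hle h).2
        · rw [List.take_length] at h
          exact ((SimpleGraph.mem_edgeSet _).mp ((hmem_es _).mp h).1).2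
      · exact Or.inr ⟨i, rfl⟩
    · rintro (⟨hρL, hρc⟩ | ⟨i, rfl⟩)
      · have hne0 : 0 < ρ.card := (L.nonempty_mem ρ hρL).card_pos
        have hc12 : ρ.card = 1 ∨ ρ.card = 2 := by omega
        rcases hc12 with h1 | h2
        · obtain ⟨v, rfl⟩ := Finset.card_eq_one.mp h1
          exact Or.inl ⟨v, rfl⟩
        · obtain ⟨u, v, huv, rfl⟩ := Finset.card_eq_two.mp h2
          refine Or.inr (Or.inl ⟨u, v, rfl, huv, ?_⟩)
          have hadj : L.skel1.Adj u v := ⟨huv, hρL⟩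
          by_cases hG : G.Adj u v
          · exact Or.inl hG
          · refine Or.inr ?_
            rw [List.take_length]
            exact (hmem_es _).mpr ⟨(SimpleGraph.mem_edgeSet _).mpr hadj,
              fun hc => hG ((SimpleGraph.mem_edgeSet _).mp hc)⟩
      · exact Or.inr (Or.inr ⟨i, i.isLt, rfl⟩)
  · intro ρ
    rw [hMmem]
    constructor
    · rintro (h | ⟨u, v, rfl, huv, hGe⟩ | ⟨i, hi, _⟩)
      · exact Or.inl h
      · rcases hGe with h | h
        · exact Or.inr ⟨u, v, h, rfl⟩
        · simp at h
      · omega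
    · rintro (h | ⟨u, v, h, rfl⟩)
      · exact Or.inl h
      · exact Or.inr (Or.inl ⟨u, v, rfl, h.ne, Or.inl h⟩)
end
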